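/- Let α > 0. Then ζ(1+α) ≥ 1/α + 1/2 + (α+1)/12 − (α+1)(α+2)(α+3)/720. -/

import Mathlib

open Real Filter Finset Topology

noncomputable def Hfun (α a : ℝ) (x : ℝ) : ℝ :=
    ((x - a) - 1/2) * x ^ (-(1+α))
    - (1+α) * (-((x-a)^2)/2 + (x-a)/2 - 1/12) * x ^ (-(1+α)-1)
    + (1+α)*(2+α) * ((x-a)^3/6 - (x-a)^2/4 + (x-a)/12) * x ^ (-(1+α)-2)
    - (1+α)*(2+α)*(3+α) * (-((x-a)^4)/24 + (x-a)^3/12 - (x-a)^2/24 + 1/720) * x ^ (-(1+α)-3)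
    + (1+α)*(2+α)*(3+α)*(4+α) * ((x-a)^5/120 - (x-a)^4/48 + (x-a)^3/72 - (x-a)/720) * x ^ (-(1+α)-4)
    - (1+α)*(2+α)*(3+α)*(4+α)*(5+α) * (-((x-a)^6)/720 + (x-a)^5/240 - (x-a)^4/288 + (x-a)^2/1440) * x ^ (-(1+α)-5)
    + x ^ (-α) / α

noncomputable def Hder (α a : ℝ) (x : ℝ) : ℝ :=
    (1+α)*(2+α)*(3+α)*(4+α)*(5+α)*(6+α) *
      (-((x-a)^6)/720 + (x-a)^5/240 - (x-a)^4/288 + (x-a)^2/1440) * x ^ (-(1+α)-6)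

set_option maxHeartbeats 2000000 in
lemma Hfun_hasDeriv (α a : ℝ) (hα : 0 < α) (x : ℝ) (hx : 0 < x) :
    HasDerivAt (Hfun α a) (Hder α a x) x := by
  unfold Hfun Hder
  have hid : HasDerivAt (fun y : ℝ => y - a) 1 x := (hasDerivAt_id x).sub_const a
  have hq1 : HasDerivAt (fun y : ℝ => (y - a) - 1/2) 1 x := hid.sub_const (1/2)
  have hq2 : HasDerivAt (fun y : ℝ => -((y-a)^2)/2 + (y-a)/2 - 1/12)
      (-(x-a) + 1/2) x := by
    have h := (((hid.pow 2).neg.div_const 2).add (hid.div_const 2)).sub_const (1/12 : ℝ)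
    exact h.congr_deriv (by ring)
  have hq3 : HasDerivAt (fun y : ℝ => (y-a)^3/6 - (y-a)^2/4 + (y-a)/12)
      ((x-a)^2/2 - (x-a)/2 + 1/12) x := by
    have h := (((hid.pow 3).div_const 6).sub ((hid.pow 2).div_const 4)).add (hid.div_const 12)
    exact h.congr_deriv (by ring)
  have hq4 : HasDerivAt (fun y : ℝ => -((y-a)^4)/24 + (y-a)^3/12 - (y-a)^2/24 + 1/720)
      (-((x-a)^3)/6 + (x-a)^2/4 - (x-a)/12) x := by
    have h := ((((hid.pow 4).neg.div_const 24).add ((hid.pow 3).div_const 12)).sub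
      ((hid.pow 2).div_const 24)).add_const (1/720 : ℝ)
    exact h.congr_deriv (by ring)
  have hq5 : HasDerivAt (fun y : ℝ => (y-a)^5/120 - (y-a)^4/48 + (y-a)^3/72 - (y-a)/720)
      ((x-a)^4/24 - (x-a)^3/12 + (x-a)^2/24 - 1/720) x := by
    have h := ((((hid.pow 5).div_const 120).sub ((hid.pow 4).div_const 48)).add
      ((hid.pow 3).div_const 72)).sub (hid.div_const 720)
    exact h.congr_deriv (by ring)
  have hq6 : HasDerivAt (fun y : ℝ => -((y-a)^6)/720 + (y-a)^5/240 - (y-a)^4/288 + (y-a)^2/1440)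
      (-((x-a)^5)/120 + (x-a)^4/48 - (x-a)^3/72 + (x-a)/720) x := by
    have h := ((((hid.pow 6).neg.div_const 720).add ((hid.pow 5).div_const 240)).sub
      ((hid.pow 4).div_const 288)).add ((hid.pow 2).div_const 1440)
    exact h.congr_deriv (by ring)
  have hr0 : HasDerivAt (fun y : ℝ => y ^ (-(1+α))) ((-(1+α)) * x ^ (-(1+α) - 1)) x :=
    Real.hasDerivAt_rpow_const (Or.inl hx.ne')
  have hr1 : HasDerivAt (fun y : ℝ => y ^ (-(1+α)-1)) ((-(1+α)-1) * x ^ (-(1+α)-1 - 1)) x :=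
    Real.hasDerivAt_rpow_const (Or.inl hx.ne')
  have hr2 : HasDerivAt (fun y : ℝ => y ^ (-(1+α)-2)) ((-(1+α)-2) * x ^ (-(1+α)-2 - 1)) x :=
    Real.hasDerivAt_rpow_const (Or.inl hx.ne')
  have hr3 : HasDerivAt (fun y : ℝ => y ^ (-(1+α)-3)) ((-(1+α)-3) * x ^ (-(1+α)-3 - 1)) x :=
    Real.hasDerivAt_rpow_const (Or.inl hx.ne')
  have hr4 : HasDerivAt (fun y : ℝ => y ^ (-(1+α)-4)) ((-(1+α)-4) * x ^ (-(1+α)-4 - 1)) x :=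
    Real.hasDerivAt_rpow_const (Or.inl hx.ne')
  have hr5 : HasDerivAt (fun y : ℝ => y ^ (-(1+α)-5)) ((-(1+α)-5) * x ^ (-(1+α)-5 - 1)) x :=
    Real.hasDerivAt_rpow_const (Or.inl hx.ne')
  have hrα : HasDerivAt (fun y : ℝ => y ^ (-α)) ((-α) * x ^ (-α - 1)) x :=
    Real.hasDerivAt_rpow_const (Or.inl hx.ne')
  have hbig := ((((((hq1.mul hr0).sub
    ((hq2.const_mul ((1+α))).mul hr1)).add
    ((hq3.const_mul ((1+α)*(2+α))).mul hr2)).sub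
    ((hq4.const_mul ((1+α)*(2+α)*(3+α))).mul hr3)).add
    ((hq5.const_mul ((1+α)*(2+α)*(3+α)*(4+α))).mul hr4)).sub
    ((hq6.const_mul ((1+α)*(2+α)*(3+α)*(4+α)*(5+α))).mul hr5)).add
    (hrα.div_const α)
  refine hbig.congr_deriv ?_
  have e1 : x ^ (-(1+α) - 1) = x ^ (-(1+α)) / x := by
    rw [Real.rpow_sub hx, Real.rpow_one]
  have e2 : x ^ (-(1+α) - 2) = x ^ (-(1+α)) / x ^ (2:ℕ) := by
    rw [Real.rpow_sub hx, ← Real.rpow_natCast x 2]; norm_num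
  have e3 : x ^ (-(1+α) - 3) = x ^ (-(1+α)) / x ^ (3:ℕ) := by
    rw [Real.rpow_sub hx, ← Real.rpow_natCast x 3]; norm_num
  have e4 : x ^ (-(1+α) - 4) = x ^ (-(1+α)) / x ^ (4:ℕ) := by
    rw [Real.rpow_sub hx, ← Real.rpow_natCast x 4]; norm_num
  have e5 : x ^ (-(1+α) - 5) = x ^ (-(1+α)) / x ^ (5:ℕ) := by
    rw [Real.rpow_sub hx, ← Real.rpow_natCast x 5]; norm_num
  have e6 : x ^ (-(1+α) - 6) = x ^ (-(1+α)) / x ^ (6:ℕ) := by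
    rw [Real.rpow_sub hx, ← Real.rpow_natCast x 6]; norm_num
  have eα : x ^ (-α - 1) = x ^ (-(1+α)) := by
    congr 1; ring
  rw [show (-(1+α)-1 - 1 : ℝ) = -(1+α) - 2 by ring,
      show (-(1+α)-2 - 1 : ℝ) = -(1+α) - 3 by ring,
      show (-(1+α)-3 - 1 : ℝ) = -(1+α) - 4 by ring,
      show (-(1+α)-4 - 1 : ℝ) = -(1+α) - 5 by ring,
      show (-(1+α)-5 - 1 : ℝ) = -(1+α) - 6 by ring,
      eα, e1, e2, e3, e4, e5, e6]
  field_simp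
  ring

noncomputable def psiA (α : ℝ) (x : ℝ) : ℝ :=
  -(x ^ (-α)) / α - x ^ (-(1+α)) / 2 - (1+α) * x ^ (-(1+α) - 1) / 12
    + (1+α)*(2+α)*(3+α) * x ^ (-(1+α) - 3) / 720

lemma Hder_nonneg (α a : ℝ) (hα : 0 < α) (x : ℝ) (hx0 : 0 < x)
    (ht0 : 0 ≤ x - a) (ht1 : x - a ≤ 1) : 0 ≤ Hder α a x := by
  unfold Hder
  have hq : -((x-a)^6)/720 + (x-a)^5/240 - (x-a)^4/288 + (x-a)^2/1440
      = ((x-a)*(1-(x-a)))^2 * (1 + 2*((x-a)*(1-(x-a)))) / 1440 := by ring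
  rw [hq]
  have hu : 0 ≤ (x-a)*(1-(x-a)) := mul_nonneg ht0 (by linarith)
  have h1 : (0:ℝ) < 1 + 2*((x-a)*(1-(x-a))) := by linarith
  have h2 : (0:ℝ) < x ^ (-(1+α)-6) := Real.rpow_pos_of_pos hx0 _
  have hc : (0:ℝ) < (1+α)*(2+α)*(3+α)*(4+α)*(5+α)*(6+α) := by positivity
  positivity

lemma psi_step (α : ℝ) (hα : 0 < α) (a : ℝ) (ha : 1 ≤ a) :
    psiA α (a+1) ≤ psiA α a + a ^ (-(1+α)) := by
  have ha0 : (0:ℝ) < a := lt_of_lt_of_le one_pos ha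
  have hmono : MonotoneOn (Hfun α a) (Set.Icc a (a+1)) := by
    apply monotoneOn_of_hasDerivWithinAt_nonneg (convex_Icc a (a+1)) (f' := Hder α a)
    · intro x hx
      have hx0 : 0 < x := lt_of_lt_of_le ha0 hx.1
      exact (Hfun_hasDeriv α a hα x hx0).continuousAt.continuousWithinAt
    · intro x hx
      have hx0 : 0 < x := by
        rw [interior_Icc] at hx
        exact lt_of_lt_of_le ha0 hx.1.le
      exact (Hfun_hasDeriv α a hα x hx0).hasDerivWithinAt
    · intro x hx
      rw [interior_Icc] at hx
      have hx0 : 0 < x := lt_of_lt_of_le ha0 hx.1.le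
      exact Hder_nonneg α a hα x hx0 (by linarith [hx.1]) (by linarith [hx.2])
  have hab : Hfun α a a ≤ Hfun α a (a+1) :=
    hmono (Set.left_mem_Icc.2 (by linarith)) (Set.right_mem_Icc.2 (by linarith)) (by linarith)
  have hHa : Hfun α a a = -(psiA α a) - a ^ (-(1+α)) := by
    unfold Hfun psiA; ring
  have hHb : Hfun α a (a+1) = -(psiA α (a+1)) := by
    unfold Hfun psiA; ring
  rw [hHa, hHb] at hab
  linarith

theorem zeta_lower_bound (α : ℝ) (hα : 0 < α) :
    (∑' n : ℕ+, (n : ℝ) ^ (-(1+α)))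
      ≥ 1/α + 1/2 + (α + 1)/12 - (α + 1)*(α + 2)*(α + 3)/720 := by
  have hs : (-(1+α) : ℝ) < -1 := by linarith
  have hsum0 : Summable (fun n : ℕ => (n : ℝ) ^ (-(1+α))) := Real.summable_nat_rpow.2 hs
  have hsum : Summable (fun n : ℕ => ((n : ℝ) + 1) ^ (-(1+α))) := by
    have := (summable_nat_add_iff 1).2 hsum0
    simpa [Nat.cast_add] using this
  have hS : (∑' n : ℕ+, (n : ℝ) ^ (-(1+α))) = ∑' n : ℕ, ((n : ℝ) + 1) ^ (-(1+α)) := by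
    rw [← Equiv.pnatEquivNat.symm.tsum_eq (fun n : ℕ+ => (n : ℝ) ^ (-(1+α)))]
    apply tsum_congr
    intro n
    congr 1
    simp [Equiv.pnatEquivNat]
  have key : ∀ N : ℕ, psiA α ((N:ℝ)+1) ≤ psiA α 1 + ∑ n ∈ Finset.range N, ((n:ℝ)+1) ^ (-(1+α)) := by
    intro N
    induction N with
    | zero => simp
    | succ N ih =>
      have h := psi_step α hα ((N:ℝ)+1) (by have : (0:ℝ) ≤ N := Nat.cast_nonneg N; linarith)
      rw [Finset.sum_range_succ]
      push_cast
      linarith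
  have hpartial : ∀ N : ℕ, ∑ n ∈ Finset.range N, ((n:ℝ)+1) ^ (-(1+α))
      ≤ ∑' n : ℕ, ((n : ℝ) + 1) ^ (-(1+α)) :=
    fun N => Summable.sum_le_tsum _ (fun i _ => Real.rpow_nonneg (by positivity) _) hsum
  have hψ1 : psiA α 1 = -(1/α + 1/2 + (α + 1)/12 - (α + 1)*(α + 2)*(α + 3)/720) := by
    simp only [psiA, Real.one_rpow]; ring
  have hb : Tendsto (fun N : ℕ => ((N:ℝ)+1)) atTop atTop :=
    tendsto_atTop_add_const_right atTop 1 tendsto_natCast_atTop_atTop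
  have T : ∀ e : ℝ, e < 0 → Tendsto (fun N : ℕ => ((N:ℝ)+1) ^ e) atTop (𝓝 0) := by
    intro e he
    have := (tendsto_rpow_neg_atTop (by linarith : (0:ℝ) < -e)).comp hb
    simpa [Function.comp_def] using this
  have hlim : Tendsto (fun N : ℕ => psiA α ((N:ℝ)+1)) atTop (𝓝 0) := by
    have h := ((((T (-α) (by linarith)).neg.div_const α).sub
      ((T (-(1+α)) (by linarith)).div_const 2)).sub
      (((T (-(1+α)-1) (by linarith)).const_mul (1+α)).div_const 12)).add
      (((T (-(1+α)-3) (by linarith)).const_mul ((1+α)*(2+α)*(3+α))).div_const 720)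
    simp only [psiA]
    simpa using h
  have hbound : ∀ N : ℕ, 1/α + 1/2 + (α + 1)/12 - (α + 1)*(α + 2)*(α + 3)/720
      ≤ (∑' n : ℕ+, (n : ℝ) ^ (-(1+α))) - psiA α ((N:ℝ)+1) := by
    intro N
    have h1 := key N
    have h2 := hpartial N
    rw [← hS] at h2
    linarith [hψ1 ▸ h1]
  have hlim2 : Tendsto (fun N : ℕ => (∑' n : ℕ+, (n : ℝ) ^ (-(1+α))) - psiA α ((N:ℝ)+1))
      atTop (𝓝 ((∑' n : ℕ+, (n : ℝ) ^ (-(1+α))) - 0)) :=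
    tendsto_const_nhds.sub hlim
  have := ge_of_tendsto' hlim2 hbound
  simpa using this
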